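/- Let p > q ≥ 1 be integers and take c = 0, so the correspondence is f₀ : z ↦ {w : w^q = z^p}. If z₀, …, z_{n−1} is a cycle of f₀ with z_i ≠ 0 for some i, then z_j ≠ 0 and |z_j| = 1 for all j, and the multiplier λ of the cycle satisfies |λ| = (p/q)^n > 1; in particular every cycle of f₀ not equal to the fixed point 0 is repelling, the only attracting cycle of f₀ is the fixed point 0, and the dual Julia set satisfies J₀* = {0}. -/

import Mathlib

open Finset

/-- `z 0, …, z (n−1)` is a cycle of length `n ≥ 1` of the correspondence
`f_c(z) = z^{p/q} + c`: `(z_{(i+1) mod n} − c)^q = z_i^p` for all `i < n`. -/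
def IsCycle (p q : ℕ) (c : ℂ) (n : ℕ) (z : ℕ → ℂ) : Prop :=
  1 ≤ n ∧ ∀ i < n, (z ((i + 1) % n) - c) ^ q = (z i) ^ p

/-- The multiplier of a cycle: `∏ p·z_i^{p−1}/(q·(z_{(i+1) mod n} − c)^{q−1})`
if no point of the cycle is `0`, and `0` if the cycle contains `0`. -/
noncomputable def cycleMultiplier (p q : ℕ) (c : ℂ) (n : ℕ) (z : ℕ → ℂ) : ℂ :=
  if ∀ i < n, z i ≠ 0 then
    ∏ i ∈ Finset.range n, (p * (z i) ^ (p - 1)) / (q * (z ((i + 1) % n) - c) ^ (q - 1))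
  else 0

/-- The dual Julia set `J_c*`: the closure of the union of all attracting cycles. -/
noncomputable def dualJulia (p q : ℕ) (c : ℂ) : Set ℂ :=
  closure {w | ∃ (n : ℕ) (z : ℕ → ℂ) (i : ℕ), IsCycle p q c n z ∧
    ‖cycleMultiplier p q c n z‖ < 1 ∧ i < n ∧ w = z i}

/-- At `c = 0`: every cycle of `f₀ : z ↦ {w : w^q = z^p}` containing a nonzero
point lies on the unit circle and has multiplier of modulus `(p/q)^n > 1`, hence
is repelling; the only attracting cycle is the fixed point `0`, and `J₀* = {0}`. -/
theorem cycles_at_zero (p q : ℕ) (hq : 1 ≤ q) (hpq : q < p) :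
    (∀ (n : ℕ) (z : ℕ → ℂ), IsCycle p q 0 n z → (∃ i < n, z i ≠ 0) →
      (∀ j < n, z j ≠ 0 ∧ ‖z j‖ = 1) ∧
      ‖cycleMultiplier p q 0 n z‖ = ((p : ℝ) / q) ^ n ∧
      1 < ‖cycleMultiplier p q 0 n z‖) ∧
    (∀ (n : ℕ) (z : ℕ → ℂ), IsCycle p q 0 n z →
      ‖cycleMultiplier p q 0 n z‖ < 1 → ∀ i < n, z i = 0) ∧
    dualJulia p q 0 = {0} := by
  have hp : 1 ≤ p := le_of_lt (lt_of_le_of_lt hq hpq)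
  have hq0 : q ≠ 0 := by omega
  have hp0 : p ≠ 0 := by omega
  have main : ∀ (n : ℕ) (z : ℕ → ℂ), IsCycle p q 0 n z → (∃ i < n, z i ≠ 0) →
      (∀ j < n, z j ≠ 0 ∧ ‖z j‖ = 1) ∧
      ‖cycleMultiplier p q 0 n z‖ = ((p : ℝ) / q) ^ n ∧
      1 < ‖cycleMultiplier p q 0 n z‖ := by
    intro n z hz hex
    obtain ⟨hn, hcyc⟩ := hz
    have hn0 : n ≠ 0 := by omega
    simp only [sub_zero] at hcyc
    -- zero propagates
    have hprop : ∀ j < n, z j = 0 → ∀ k, z ((j + k) % n) = 0 := by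
      intro j hj h0 k
      induction k with
      | zero => simpa [Nat.mod_eq_of_lt hj] using h0
      | succ k ih =>
        have hlt : (j + k) % n < n := Nat.mod_lt _ (by omega)
        have h1 := hcyc _ hlt
        rw [ih] at h1
        have : z (((j + k) % n + 1) % n) = 0 := by
          have := h1.trans (zero_pow hp0)
          exact pow_eq_zero_iff hq0 |>.mp this
        rw [Nat.mod_add_mod] at this
        exact this
    have hnz : ∀ j < n, z j ≠ 0 := by
      intro j hj hj0
      obtain ⟨i, hi, hi0⟩ := hex
      have := hprop j hj hj0 (n - j + i)
      rw [show j + (n - j + i) = n + i by omega, Nat.add_mod_left,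
        Nat.mod_eq_of_lt hi] at this
      exact hi0 this
    have habs : ∀ i < n, (‖z ((i + 1) % n)‖) ^ q = (‖z i‖) ^ p := by
      intro i hi
      rw [← norm_pow, ← norm_pow, hcyc i hi]
    have hone : ∀ j < n, ‖z j‖ = 1 := by
      intro j hj
      have key : ∀ k, (‖z ((j + k) % n)‖) ^ (q ^ k)
          = (‖z j‖) ^ (p ^ k) := by
        intro k
        induction k with
        | zero => simp [Nat.mod_eq_of_lt hj]
        | succ k ih =>
          have hlt : (j + k) % n < n := Nat.mod_lt _ (by omega)
          have h1 := habs _ hlt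
          rw [Nat.mod_add_mod, show j + k + 1 = j + (k + 1) from rfl] at h1
          calc (‖z ((j + (k + 1)) % n)‖) ^ (q ^ (k + 1))
              = ((‖z ((j + (k + 1)) % n)‖) ^ q) ^ (q ^ k) := by
                rw [← pow_mul, pow_succ']
            _ = ((‖z ((j + k) % n)‖) ^ p) ^ (q ^ k) := by rw [h1]
            _ = ((‖z ((j + k) % n)‖) ^ (q ^ k)) ^ p := by
                rw [← pow_mul, ← pow_mul, Nat.mul_comm]
            _ = ((‖z j‖) ^ (p ^ k)) ^ p := by rw [ih]
            _ = (‖z j‖) ^ (p ^ (k + 1)) := by rw [← pow_mul, pow_succ]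
      have hkey := key n
      rw [Nat.add_mod_right, Nat.mod_eq_of_lt hj] at hkey
      have hr0 : 0 < ‖z j‖ := norm_pos_iff.mpr (hnz j hj)
      have hexp : q ^ n < p ^ n := Nat.pow_lt_pow_left hpq hn0
      rcases lt_trichotomy (‖z j‖) 1 with h | h | h
      · have := pow_lt_pow_right_of_lt_one₀ hr0 h hexp
        linarith
      · exact h
      · have := pow_lt_pow_right₀ h hexp
        linarith
    have hmul : ‖cycleMultiplier p q 0 n z‖ = ((p : ℝ) / q) ^ n := by
      have hterm : ∀ i ∈ Finset.range n,
          ‖(p : ℂ) * z i ^ (p - 1) / ((q : ℂ) * (z ((i + 1) % n) - 0) ^ (q - 1))‖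
            = (p : ℝ) / q := by
        intro i hi
        rw [Finset.mem_range] at hi
        have hlt : (i + 1) % n < n := Nat.mod_lt _ (by omega)
        rw [sub_zero, norm_div, norm_mul, norm_mul, norm_pow, norm_pow,
          Complex.norm_natCast, Complex.norm_natCast, hone i hi, hone _ hlt,
          one_pow, one_pow, mul_one, mul_one]
      rw [cycleMultiplier, if_pos hnz, norm_prod, Finset.prod_congr rfl hterm,
        Finset.prod_const, Finset.card_range]
    have hgt : 1 < ((p : ℝ) / q) ^ n := by
      have h1 : (1 : ℝ) < (p : ℝ) / q := by
        rw [lt_div_iff₀ (by positivity)]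
        · norm_num
          exact_mod_cast hpq
      exact one_lt_pow₀ h1 hn0
    exact ⟨fun j hj => ⟨hnz j hj, hone j hj⟩, hmul, hmul ▸ hgt⟩
  refine ⟨main, ?_, ?_⟩
  · intro n z hz hlt i hi
    by_contra h0
    have := (main n z hz ⟨i, hi, h0⟩).2.2
    linarith
  · have hset : {w | ∃ (n : ℕ) (z : ℕ → ℂ) (i : ℕ), IsCycle p q 0 n z ∧
        ‖cycleMultiplier p q 0 n z‖ < 1 ∧ i < n ∧ w = z i} = {0} := by
      ext w
      simp only [Set.mem_setOf_eq, Set.mem_singleton_iff]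
      constructor
      · rintro ⟨n, z, i, hz, hlt, hi, rfl⟩
        by_contra h0
        have := (main n z hz ⟨i, hi, h0⟩).2.2
        linarith
      · rintro rfl
        refine ⟨1, fun _ => 0, 0, ⟨le_refl 1, ?_⟩, ?_, Nat.one_pos, rfl⟩
        · intro i hi
          rw [sub_zero, zero_pow hq0, zero_pow hp0]
        · rw [cycleMultiplier, if_neg (by simp)]
          simp
    rw [dualJulia, hset, closure_singleton]
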